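/- arXiv:1211.3783 — 6 statements merged into one kernel-verified Lean document; each statement's English description precedes it below -/
import Mathlib

section
/- (Van der Corput) Let a ≤ b be real numbers and F : [a,b] → ℝ a differentiable function whose derivative F′ is monotone on [a,b] and satisfies |F′(t)| ≥ 1 for all t in the open interval (a,b). Then |∫_a^b exp(i·F(t)) dt| ≤ 3. -/
open Set intervalIntegral MeasureTheory Complex

/-- norm of exp(I x) is 1 -/
private lemma norm_exp_I_mul (x : ℝ) : ‖Complex.exp (Complex.I * (x : ℂ))‖ = 1 := by
  rw [mul_comm, Complex.norm_exp_ofReal_mul_I]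

private lemma inv_lt_swap {x y : ℝ} (hx : 0 < x) (hy : 0 < y) :
    x < y⁻¹ ↔ y < x⁻¹ := by
  rw [lt_inv_comm₀ hx hy]

/-- Core bound: integral of `exp(I F) * F'` over an order-connected subset of `(a,b)`
has norm at most 2. -/
private lemma core (a b : ℝ) (F F' G Fc : ℝ → ℝ)
    (hderiv : ∀ t ∈ Icc a b, HasDerivAt F (F' t) t)
    (hFc : EqOn Fc F (Icc a b)) (hG : EqOn G F' (Icc a b))
    (hGmono : Monotone G ∨ Antitone G) (hFccont : Continuous Fc)
    (T : Set ℝ) (hT : OrdConnected T) (hTmeas : MeasurableSet T) (hTsub : T ⊆ Ioo a b) :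
    ‖∫ t in T, Complex.exp (Complex.I * (Fc t : ℂ)) * (G t : ℂ)‖ ≤ 2 := by
  rcases T.eq_empty_or_nonempty with rfl | hne
  · simp
  have hbdd_above : BddAbove T := ⟨b, fun x hx => (hTsub hx).2.le⟩
  have hbdd_below : BddBelow T := ⟨a, fun x hx => (hTsub hx).1.le⟩
  set c := sInf T with hc
  set d := sSup T with hd
  obtain ⟨t0, ht0⟩ := hne
  have hcd : c ≤ d := le_trans (csInf_le hbdd_below ht0) (le_csSup hbdd_above ht0)
  have hcab : c ∈ Icc a b := ⟨le_csInf ⟨t0, ht0⟩ (fun x hx => (hTsub hx).1.le),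
    le_trans (csInf_le hbdd_below ht0) (hTsub ht0).2.le⟩
  have hdab : d ∈ Icc a b := ⟨le_trans (hTsub ht0).1.le (le_csSup hbdd_above ht0),
    csSup_le ⟨t0, ht0⟩ (fun x hx => (hTsub hx).2.le)⟩
  have hIoo : Ioo c d ⊆ T := by
    intro x hx
    obtain ⟨u, hu, hux⟩ := exists_lt_of_csInf_lt ⟨t0, ht0⟩ hx.1
    obtain ⟨v, hv, hxv⟩ := exists_lt_of_lt_csSup ⟨t0, ht0⟩ hx.2
    exact hT.out hu hv ⟨hux.le, hxv.le⟩
  have hsubIcc : T ⊆ Icc c d := fun x hx => ⟨csInf_le hbdd_below hx, le_csSup hbdd_above hx⟩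
  have haeeq : T =ᵐ[volume] Ioo c d := by
    rw [MeasureTheory.ae_eq_set]
    constructor
    · refine measure_mono_null (fun x hx => ?_) (?_ : volume ({c} ∪ {d} : Set ℝ) = 0)
      · rcases hsubIcc hx.1 with ⟨h1, h2⟩
        rcases h1.eq_or_lt with h | h
        · exact Or.inl h.symm
        rcases h2.eq_or_lt with h' | h'
        · exact Or.inr h'
        · exact absurd ⟨h, h'⟩ hx.2
      · exact measure_union_null (measure_singleton c) (measure_singleton d)
    · rw [Set.diff_eq_empty.mpr hIoo]; simp
  rw [setIntegral_congr_set haeeq]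
  have hIccab : Icc c d ⊆ Icc a b := Icc_subset_Icc hcab.1 hdab.2
  have key : ∫ t in Ioo c d, Complex.exp (Complex.I * (Fc t : ℂ)) * (G t : ℂ)
      = ∫ t in c..d, Complex.exp (Complex.I * (F t : ℂ)) * (F' t : ℂ) := by
    rw [intervalIntegral.integral_of_le hcd, integral_Ioc_eq_integral_Ioo]
    refine setIntegral_congr_fun measurableSet_Ioo (fun x hx => ?_)
    have hx' : x ∈ Icc a b := hIccab (Ioo_subset_Icc_self hx)
    rw [hFc hx', hG hx']
  rw [key]
  -- FTC
  have hderiv2 : ∀ t ∈ uIcc c d,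
      HasDerivAt (fun t => -Complex.I * Complex.exp (Complex.I * (F t : ℂ)))
        (Complex.exp (Complex.I * (F t : ℂ)) * (F' t : ℂ)) t := by
    intro t ht
    rw [uIcc_of_le hcd] at ht
    have h1 : HasDerivAt (fun t => (F t : ℂ)) (F' t : ℂ) t :=
      (hderiv t (hIccab ht)).ofReal_comp
    have h2 := (h1.const_mul Complex.I).cexp.const_mul (-Complex.I)
    convert h2 using 1
    have hI := Complex.I_mul_I
    set e := Complex.exp (Complex.I * (F t : ℂ))
    · rfl
    · linear_combination (Complex.exp (Complex.I * (F t : ℂ)) * (F' t : ℂ)) * Complex.I_mul_I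
  have hGint : IntervalIntegrable G volume c d := by
    rcases hGmono with h | h
    · exact (h.monotoneOn _).intervalIntegrable
    · exact (h.antitoneOn _).intervalIntegrable
  have hint : IntervalIntegrable (fun t => Complex.exp (Complex.I * (F t : ℂ)) * (F' t : ℂ))
      volume c d := by
    have hGmeas : Measurable G := by
      rcases hGmono with h | h
      · exact h.measurable
      · exact h.measurable
    refine hGint.mono_fun ?_ ?_
    · have : AEStronglyMeasurable (fun t => Complex.exp (Complex.I * (Fc t : ℂ)) * (G t : ℂ))
          (volume.restrict (uIoc c d)) :=
        (((Complex.continuous_exp.comp (continuous_const.mul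
          (Complex.continuous_ofReal.comp hFccont))).measurable).mul
          (Complex.measurable_ofReal.comp hGmeas)).aestronglyMeasurable
      refine this.congr ?_
      rw [uIoc_of_le hcd]
      refine (ae_restrict_iff' measurableSet_Ioc).2 (Filter.Eventually.of_forall fun x hx => ?_)
      have hx' : x ∈ Icc a b := hIccab (Ioc_subset_Icc_self hx)
      simp only [hFc hx', hG hx']
    · refine (ae_restrict_iff' measurableSet_uIoc).2 (Filter.Eventually.of_forall fun x hx => ?_)
      rw [uIoc_of_le hcd] at hx
      have hx' : x ∈ Icc a b := hIccab (Ioc_subset_Icc_self hx)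
      simp only []
      rw [norm_mul, norm_exp_I_mul, one_mul, Complex.norm_real, hG hx']
  rw [intervalIntegral.integral_eq_sub_of_hasDerivAt hderiv2 hint]
  have h1 : ‖-Complex.I * Complex.exp (Complex.I * (F d : ℂ))‖ = 1 := by
    rw [norm_mul, norm_neg, Complex.norm_I, one_mul, norm_exp_I_mul]
  have h2 : ‖-Complex.I * Complex.exp (Complex.I * (F c : ℂ))‖ = 1 := by
    rw [norm_mul, norm_neg, Complex.norm_I, one_mul, norm_exp_I_mul]
  calc ‖_ - _‖ ≤ _ + _ := norm_sub_le _ _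
  _ ≤ 2 := by rw [h1, h2]; norm_num

private lemma key (a b : ℝ) (hab : a ≤ b) (F F' : ℝ → ℝ)
    (hderiv : ∀ t ∈ Icc a b, HasDerivAt F (F' t) t)
    (hmono : MonotoneOn F' (Icc a b) ∨ AntitoneOn F' (Icc a b))
    (hpos : ∀ t ∈ Ioo a b, 1 ≤ F' t) :
    ‖∫ t in a..b, Complex.exp (Complex.I * (F t : ℂ))‖ ≤ 2 := by
  set proj : ℝ → ℝ := fun t => min b (max a t) with hprojdef
  have hprojmono : Monotone proj := fun x y h =>
    min_le_min le_rfl (max_le_max le_rfl h)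
  have hprojmem : ∀ t, proj t ∈ Icc a b := fun t =>
    ⟨le_min hab (le_max_left a t), min_le_left _ _⟩
  have hprojid : ∀ t ∈ Icc a b, proj t = t := fun t ht => by
    simp only [hprojdef]; rw [max_eq_right ht.1, min_eq_right ht.2]
  set G : ℝ → ℝ := fun t => F' (proj t) with hGdef
  set Fc : ℝ → ℝ := fun t => F (proj t) with hFcdef
  have hGeq : EqOn G F' (Icc a b) := fun t ht => by
    simp only [hGdef, hprojid t ht]
  have hFceq : EqOn Fc F (Icc a b) := fun t ht => by
    simp only [hFcdef, hprojid t ht]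
  have hGmono : Monotone G ∨ Antitone G := by
    rcases hmono with h | h
    · exact Or.inl fun x y hxy => h (hprojmem x) (hprojmem y) (hprojmono hxy)
    · exact Or.inr fun x y hxy => h (hprojmem x) (hprojmem y) (hprojmono hxy)
  have hGmeas : Measurable G := by
    rcases hGmono with h | h
    · exact h.measurable
    · exact h.measurable
  have hG1 : ∀ t ∈ Ioo a b, 1 ≤ G t := fun t ht => by
    rw [hGeq (Ioo_subset_Icc_self ht)]; exact hpos t ht
  have hFcont : ContinuousOn F (Icc a b) := fun x hx =>
    (hderiv x hx).continuousAt.continuousWithinAt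
  have hprojcont : Continuous proj :=
    continuous_const.min (continuous_const.max continuous_id)
  have hFccont : Continuous Fc :=
    hFcont.comp_continuous hprojcont hprojmem
  set M : ℝ := max |F' a| |F' b| with hMdef
  have hM0 : 0 ≤ M := le_trans (abs_nonneg _) (le_max_left _ _)
  have hGbd : ∀ t, |G t| ≤ M := by
    intro t
    rcases hmono with h | h
    · exact abs_le_max_abs_abs (h (left_mem_Icc.2 hab) (hprojmem t) (hprojmem t).1)
        (h (hprojmem t) (right_mem_Icc.2 hab) (hprojmem t).2)
    · exact le_trans (abs_le_max_abs_abs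
        (h (hprojmem t) (right_mem_Icc.2 hab) (hprojmem t).2)
        (h (left_mem_Icc.2 hab) (hprojmem t) (hprojmem t).1)) (le_of_eq (max_comm _ _))
  set ψ : ℝ × ℝ → ℂ := fun p =>
    if p.2 < (G p.1)⁻¹ then Complex.exp (Complex.I * (Fc p.1 : ℂ)) * (G p.1 : ℂ) else 0
    with hψdef
  have hψmeas : Measurable ψ := by
    refine Measurable.ite (measurableSet_lt measurable_snd ((hGmeas.comp measurable_fst).inv))
      ?_ measurable_const
    exact ((Complex.continuous_exp.measurable).comp
      (measurable_const.mul (Complex.measurable_ofReal.comp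
        (hFccont.measurable.comp measurable_fst)))).mul
      (Complex.measurable_ofReal.comp (hGmeas.comp measurable_fst))
  haveI hν : IsFiniteMeasure (volume.restrict (Ioo (0:ℝ) 1)) :=
    ⟨by rw [Measure.restrict_apply_univ]; exact measure_Ioo_lt_top⟩
  haveI hμ : IsFiniteMeasure (volume.restrict (Ioo a b)) :=
    ⟨by rw [Measure.restrict_apply_univ]; exact measure_Ioo_lt_top⟩
  have hψint : Integrable ψ ((volume.restrict (Ioo a b)).prod (volume.restrict (Ioo (0:ℝ) 1))) := by
    refine Integrable.mono' (integrable_const M) hψmeas.aestronglyMeasurable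
      (Filter.Eventually.of_forall fun p => ?_)
    by_cases h : p.2 < (G p.1)⁻¹
    · simp only [hψdef, if_pos h]
      rw [norm_mul, norm_exp_I_mul, one_mul, Complex.norm_real]
      exact hGbd p.1
    · simp only [hψdef, if_neg h, norm_zero]; exact hM0
  -- pointwise layer cake
  have ptwise : ∀ t ∈ Ioo a b,
      (∫ s in Ioo (0:ℝ) 1, ψ (t, s)) = Complex.exp (Complex.I * (Fc t : ℂ)) := by
    intro t ht
    have hGt : 1 ≤ G t := hG1 t ht
    have hGtpos : 0 < G t := lt_of_lt_of_le zero_lt_one hGt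
    have hr : 0 < (G t)⁻¹ := inv_pos.2 hGtpos
    have hr1 : (G t)⁻¹ ≤ 1 := by
      rw [inv_le_one_iff₀]; right; exact hGt
    have hind : (fun s => ψ (t, s)) =
        (Iio ((G t)⁻¹)).indicator (fun _ => Complex.exp (Complex.I * (Fc t : ℂ)) * (G t : ℂ)) := by
      funext s
      simp only [hψdef, Set.indicator_apply, mem_Iio]
    rw [hind, MeasureTheory.integral_indicator measurableSet_Iio,
      Measure.restrict_restrict measurableSet_Iio]
    have hset : Iio ((G t)⁻¹) ∩ Ioo 0 1 = Ioo 0 ((G t)⁻¹) := by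
      ext x
      simp only [mem_inter_iff, mem_Iio, mem_Ioo]
      constructor
      · rintro ⟨h1, h2, h3⟩; exact ⟨h2, h1⟩
      · rintro ⟨h1, h2⟩; exact ⟨h2, h1, lt_of_lt_of_le h2 hr1⟩
    rw [hset, setIntegral_const, Real.volume_real_Ioo_of_le hr.le, sub_zero]
    have hGne : (G t : ℂ) ≠ 0 := by exact_mod_cast ne_of_gt hGtpos
    rw [Complex.real_smul, Complex.ofReal_inv]
    field_simp
  have e1 : (∫ t in a..b, Complex.exp (Complex.I * (F t : ℂ)))
      = ∫ t in Ioo a b, Complex.exp (Complex.I * (Fc t : ℂ)) := by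
    rw [intervalIntegral.integral_of_le hab, integral_Ioc_eq_integral_Ioo]
    refine setIntegral_congr_fun measurableSet_Ioo fun x hx => ?_
    simp only [hFceq (Ioo_subset_Icc_self hx)]
  have e2 : (∫ t in Ioo a b, Complex.exp (Complex.I * (Fc t : ℂ)))
      = ∫ t in Ioo a b, ∫ s in Ioo (0:ℝ) 1, ψ (t, s) :=
    setIntegral_congr_fun measurableSet_Ioo fun t ht => (ptwise t ht).symm
  have e3 : (∫ t in Ioo a b, ∫ s in Ioo (0:ℝ) 1, ψ (t, s))
      = ∫ s in Ioo (0:ℝ) 1, ∫ t in Ioo a b, ψ (t, s) :=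
    MeasureTheory.integral_integral_swap hψint
  rw [e1, e2, e3]
  have hbound : ∀ s ∈ Ioo (0:ℝ) 1, ‖∫ t in Ioo a b, ψ (t, s)‖ ≤ 2 := by
    intro s hs
    have hsetmeas : MeasurableSet {t : ℝ | s < (G t)⁻¹} :=
      measurableSet_lt measurable_const hGmeas.inv
    have hind : (fun t => ψ (t, s)) =
        Set.indicator {t : ℝ | s < (G t)⁻¹}
          (fun t => Complex.exp (Complex.I * (Fc t : ℂ)) * (G t : ℂ)) := by
      funext t
      simp only [hψdef, Set.indicator_apply, mem_setOf_eq]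
    rw [hind, MeasureTheory.integral_indicator hsetmeas,
      Measure.restrict_restrict hsetmeas]
    set T : Set ℝ := {t : ℝ | s < (G t)⁻¹} ∩ Ioo a b with hTdef
    have hTeq : T = {t : ℝ | G t < s⁻¹} ∩ Ioo a b := by
      ext x
      simp only [hTdef, mem_inter_iff, mem_setOf_eq]
      constructor <;> rintro ⟨h1, h2⟩ <;> refine ⟨?_, h2⟩
      · exact (inv_lt_swap hs.1 (lt_of_lt_of_le zero_lt_one (hG1 x h2))).mp h1
      · exact (inv_lt_swap (lt_of_lt_of_le zero_lt_one (hG1 x h2)) hs.1).mp h1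
    have hTord : OrdConnected T := by
      rw [hTeq]
      refine OrdConnected.inter ?_ ordConnected_Ioo
      rcases hGmono with h | h
      · exact ⟨fun x hx y hy z hz => lt_of_le_of_lt (h hz.2) hy⟩
      · exact ⟨fun x hx y hy z hz => lt_of_le_of_lt (h hz.1) hx⟩
    exact core a b F F' G Fc hderiv hFceq hGeq hGmono hFccont T hTord
      (hsetmeas.inter measurableSet_Ioo) inter_subset_right
  have hfin : ‖∫ s in Ioo (0:ℝ) 1, ∫ t in Ioo a b, ψ (t, s)‖
      ≤ 2 * ((volume.restrict (Ioo (0:ℝ) 1)) univ).toReal :=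
    MeasureTheory.norm_integral_le_of_norm_le_const
      ((ae_restrict_iff' measurableSet_Ioo).2 (Filter.Eventually.of_forall hbound))
  refine hfin.trans ?_
  rw [Measure.restrict_apply_univ, Real.volume_Ioo]
  norm_num

/-- **Van der Corput's lemma.** If `F : [a,b] → ℝ` is differentiable, its derivative `F'`
is monotone (in either direction), and `|F'| ≥ 1` on `(a,b)`, then
`|∫_a^b exp(i F(t)) dt| ≤ 3`. -/
theorem van_der_corput
    (a b : ℝ) (hab : a ≤ b) (F F' : ℝ → ℝ)
    (hderiv : ∀ t ∈ Icc a b, HasDerivAt F (F' t) t)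
    (hmono : MonotoneOn F' (Icc a b) ∨ AntitoneOn F' (Icc a b))
    (hbig : ∀ t ∈ Ioo a b, 1 ≤ |F' t|) :
    ‖∫ t in a..b, Complex.exp (Complex.I * (F t : ℂ))‖ ≤ 3 := by
  have dich : (∀ t ∈ Ioo a b, 1 ≤ F' t) ∨ (∀ t ∈ Ioo a b, F' t ≤ -1) := by
    by_contra h
    push_neg at h
    obtain ⟨⟨t1, ht1, h1⟩, ⟨t2, ht2, h2⟩⟩ := h
    have H1 : F' t1 ≤ -1 := by
      have := hbig t1 ht1
      rcases abs_cases (F' t1) with ⟨he, _⟩ | ⟨he, _⟩ <;> linarith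
    have H2 : 1 ≤ F' t2 := by
      have := hbig t2 ht2
      rcases abs_cases (F' t2) with ⟨he, _⟩ | ⟨he, _⟩ <;> linarith
    rcases le_total t1 t2 with hle | hle
    · have hd : ∀ x ∈ Icc t1 t2, HasDerivWithinAt F (F' x) (Icc t1 t2) x := fun x hx =>
        (hderiv x (Icc_subset_Icc ht1.1.le ht2.2.le hx)).hasDerivWithinAt
      obtain ⟨c, hc, hc0⟩ := exists_hasDerivWithinAt_eq_of_gt_of_lt hle hd
        (show F' t1 < 0 by linarith) (show (0:ℝ) < F' t2 by linarith)
      have hcmem : c ∈ Ioo a b := ⟨ht1.1.trans hc.1, hc.2.trans ht2.2⟩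
      have := hbig c hcmem
      rw [hc0] at this
      norm_num at this
    · have hd : ∀ x ∈ Icc t2 t1, HasDerivWithinAt F (F' x) (Icc t2 t1) x := fun x hx =>
        (hderiv x (Icc_subset_Icc ht2.1.le ht1.2.le hx)).hasDerivWithinAt
      obtain ⟨c, hc, hc0⟩ := exists_hasDerivWithinAt_eq_of_lt_of_gt hle hd
        (show (0:ℝ) < F' t2 by linarith) (show F' t1 < 0 by linarith)
      have hcmem : c ∈ Ioo a b := ⟨ht2.1.trans hc.1, hc.2.trans ht1.2⟩
      have := hbig c hcmem
      rw [hc0] at this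
      norm_num at this
  rcases dich with hposi | hneg
  · exact (key a b hab F F' hderiv hmono hposi).trans (by norm_num)
  · have hd2 : ∀ t ∈ Icc a b, HasDerivAt (fun t => -F t) (-F' t) t := fun t ht =>
      (hderiv t ht).neg
    have hm2 : MonotoneOn (fun t => -F' t) (Icc a b) ∨ AntitoneOn (fun t => -F' t) (Icc a b) := by
      rcases hmono with h | h
      · exact Or.inr fun x hx y hy hxy => neg_le_neg (h hx hy hxy)
      · exact Or.inl fun x hx y hy hxy => neg_le_neg (h hx hy hxy)
    have hp2 : ∀ t ∈ Ioo a b, 1 ≤ -F' t := fun t ht => by linarith [hneg t ht]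
    have hk : ‖∫ t in a..b, Complex.exp (Complex.I * ((-F t : ℝ) : ℂ))‖ ≤ 2 :=
      key a b hab (fun t => -F t) (fun t => -F' t) hd2 hm2 hp2
    have hconj : (∫ t in a..b, Complex.exp (Complex.I * ((-F t : ℝ) : ℂ)))
        = starRingEnd ℂ (∫ t in a..b, Complex.exp (Complex.I * (F t : ℂ))) := by
      rw [intervalIntegral.integral_of_le hab, intervalIntegral.integral_of_le hab,
        ← integral_conj]
      refine integral_congr_ae (Filter.Eventually.of_forall fun t => ?_)
      show Complex.exp (Complex.I * ((-F t : ℝ) : ℂ))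
        = starRingEnd ℂ (Complex.exp (Complex.I * ((F t : ℝ) : ℂ)))
      rw [← Complex.exp_conj, map_mul, Complex.conj_I, Complex.conj_ofReal]
      congr 1
      push_cast
      ring
    rw [hconj, RCLike.norm_conj] at hk
    linarith
end

section
/- Let Ω = ℤ ∪ 2πℤ ⊆ ℝ. For every nonzero real number a, the image of Ω under the quotient homomorphism ℝ → ℝ/aℤ is dense in the circle group ℝ/aℤ; consequently Ω has dense image in every compact quotient group of ℝ. -/
open Real

/-- If `b / a` is irrational, the subgroup generated by `a` and `b` is dense in `ℝ`. -/
lemma aux_dense_sup {a b : ℝ} (h : Irrational (b / a)) :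
    Dense ((AddSubgroup.zmultiples b ⊔ AddSubgroup.zmultiples a : AddSubgroup ℝ) : Set ℝ) := by
  rcases AddSubgroup.dense_or_cyclic (AddSubgroup.zmultiples b ⊔ AddSubgroup.zmultiples a)
    with hd | ⟨c, hc⟩
  · exact hd
  · exfalso
    rw [← AddSubgroup.zmultiples_eq_closure] at hc
    have hb : b ∈ AddSubgroup.zmultiples c := hc ▸ AddSubgroup.mem_sup_left
      (AddSubgroup.mem_zmultiples b)
    have ha : a ∈ AddSubgroup.zmultiples c := hc ▸ AddSubgroup.mem_sup_right
      (AddSubgroup.mem_zmultiples a)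
    obtain ⟨m, hm⟩ := hb
    obtain ⟨n, hn⟩ := ha
    have ha0 : a ≠ 0 := by
      rintro rfl
      exact h.ne_rat 0 (by simp)
    have hc0 : c ≠ 0 := by
      rintro rfl
      simp at hn
      exact ha0 hn.symm
    have hn0 : (n : ℝ) ≠ 0 := by
      rw [Int.cast_ne_zero]
      rintro rfl
      simp at hn
      exact ha0 hn.symm
    apply h
    refine ⟨(m : ℚ) / (n : ℚ), ?_⟩
    rw [← hm, ← hn]
    push_cast [zsmul_eq_mul]
    field_simp

/-- If the preimage of the image is dense, the image under a continuous surjection is dense. -/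
lemma aux_dense_image {X Y : Type*} [TopologicalSpace X] [TopologicalSpace Y]
    {f : X → Y} (hf : Continuous f) (hsurj : Function.Surjective f)
    {s : Set X} (h : Dense s) : Dense (f '' s) :=
  (hsurj.denseRange).dense_image hf h

/-- The set `Ω = ℤ ∪ 2πℤ` has dense image in the circle `ℝ/aℤ` for every nonzero real `a`;
consequently it has dense image in every compact quotient group of `ℝ`. -/
theorem int_union_two_pi_int_dense_in_quotients :
    (∀ a : ℝ, a ≠ 0 →
      Dense ((fun x : ℝ => (x : AddCircle a)) ''
        {x : ℝ | (∃ n : ℤ, x = n) ∨ ∃ n : ℤ, x = 2 * π * n})) ∧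
    ∀ (H : AddSubgroup ℝ), CompactSpace (ℝ ⧸ H) →
      Dense ((QuotientAddGroup.mk : ℝ → ℝ ⧸ H) ''
        {x : ℝ | (∃ n : ℤ, x = n) ∨ ∃ n : ℤ, x = 2 * π * n}) := by
  set Ω : Set ℝ := {x : ℝ | (∃ n : ℤ, x = n) ∨ ∃ n : ℤ, x = 2 * π * n} with hΩ
  have key : ∀ a : ℝ, a ≠ 0 →
      Dense ((fun x : ℝ => (x : AddCircle a)) '' Ω) := by
    intro a ha
    -- choose b ∈ {1, 2π} with b/a irrational
    obtain ⟨b, hbΩ, hirr⟩ :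
        ∃ b : ℝ, (∀ n : ℤ, (n • b) ∈ Ω) ∧ Irrational (b / a) := by
      by_cases hra : Irrational (1 / a)
      · exact ⟨1, fun n => Or.inl ⟨n, by push_cast [zsmul_eq_mul]; ring⟩, hra⟩
      · refine ⟨2 * π, fun n => Or.inr ⟨n, by push_cast [zsmul_eq_mul]; ring⟩, ?_⟩
        rw [Irrational] at hra ⊢
        push_neg at hra
        obtain ⟨q, hq⟩ := hra
        have hq0 : (q : ℝ) ≠ 0 := by
          rw [hq]; exact one_div_ne_zero ha
        intro ⟨r, hr⟩
        apply irrational_pi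
        refine ⟨r / (2 * q), ?_⟩
        push_cast
        rw [hr, hq]
        field_simp
    have hdense := aux_dense_sup hirr
    have hcont : Continuous (fun x : ℝ => (x : AddCircle a)) := continuous_quotient_mk'
    have hsurj : Function.Surjective (fun x : ℝ => (x : AddCircle a)) :=
      QuotientAddGroup.mk_surjective
    have := aux_dense_image hcont hsurj hdense
    refine this.mono ?_
    rintro y ⟨x, hx, rfl⟩
    rw [SetLike.mem_coe, AddSubgroup.mem_sup] at hx
    obtain ⟨y, ⟨m, rfl⟩, z, ⟨n, rfl⟩, rfl⟩ := hx
    refine ⟨m • b, hbΩ m, ?_⟩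
    show ((m • b : ℝ) : AddCircle a) = ((m • b + n • a : ℝ) : AddCircle a)
    rw [eq_comm, QuotientAddGroup.mk_add, add_eq_left, QuotientAddGroup.eq_zero_iff]
    exact ⟨n, rfl⟩
  refine ⟨key, fun H hH => ?_⟩
  rcases AddSubgroup.dense_or_cyclic H with hd | ⟨c, hc⟩
  · -- H is dense: preimage of the image contains H
    have hcont : Continuous (QuotientAddGroup.mk : ℝ → ℝ ⧸ H) := continuous_quotient_mk'
    have hsurj : Function.Surjective (QuotientAddGroup.mk : ℝ → ℝ ⧸ H) :=
      QuotientAddGroup.mk_surjective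
    have hsub : (H : Set ℝ) ⊆ (QuotientAddGroup.mk : ℝ → ℝ ⧸ H) ⁻¹'
        ((QuotientAddGroup.mk : ℝ → ℝ ⧸ H) '' Ω) := by
      intro x hx
      refine ⟨0, Or.inl ⟨0, by norm_num⟩, ?_⟩
      rw [eq_comm, QuotientAddGroup.eq_iff_sub_mem]
      simpa using hx
    have : Dense ((QuotientAddGroup.mk : ℝ → ℝ ⧸ H) ⁻¹'
        ((QuotientAddGroup.mk : ℝ → ℝ ⧸ H) '' Ω)) := hd.mono hsub
    have h2 := aux_dense_image hcont hsurj this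
    refine h2.mono ?_
    rintro y ⟨x, hx, rfl⟩
    exact hx
  · rw [← AddSubgroup.zmultiples_eq_closure] at hc
    subst hc
    rcases eq_or_ne c 0 with rfl | hc0
    · -- H = ⊥: the quotient is homeomorphic to ℝ, which is not compact
      exfalso
      have hbot : AddSubgroup.zmultiples (0 : ℝ) = ⊥ := by
        ext x; simp [AddSubgroup.mem_zmultiples_iff, AddSubgroup.mem_bot, eq_comm]
      rw [hbot] at hH
      have hinj : Function.Injective (QuotientAddGroup.mk : ℝ → ℝ ⧸ (⊥ : AddSubgroup ℝ)) := by
        intro x y hxy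
        rwa [QuotientAddGroup.eq_iff_sub_mem, AddSubgroup.mem_bot, sub_eq_zero] at hxy
      have hsurj : Function.Surjective (QuotientAddGroup.mk : ℝ → ℝ ⧸ (⊥ : AddSubgroup ℝ)) :=
        QuotientAddGroup.mk_surjective
      let e : ℝ ≃ₜ (ℝ ⧸ (⊥ : AddSubgroup ℝ)) :=
        Equiv.toHomeomorphOfContinuousOpen (Equiv.ofBijective _ ⟨hinj, hsurj⟩)
          continuous_quotient_mk' QuotientAddGroup.isOpenMap_coe
      have : CompactSpace ℝ := e.symm.compactSpace
      exact (not_compactSpace_iff.mpr inferInstance) this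
    · exact key c hc0
end

section
/- Let α : ℝ → 𝕋 × 𝕋 be the continuous homomorphism α(v) = (exp(iv), exp(2πiv)), where 𝕋 is the multiplicative group of complex numbers of modulus 1, and let Ω = ℤ ∪ 2πℤ ⊆ ℝ. Then the closure of α(Ω) in 𝕋 × 𝕋 equals (𝕋 × {1}) ∪ ({1} × 𝕋), while the closure of α(ℝ) is all of 𝕋 × 𝕋. In particular α(Ω) is not dense in the closure of α(ℝ), so Ω is not Bohr dense in ℝ even though it has dense image in every compact quotient group of ℝ. -/
open Real

private lemma two_pi_int_rel (p q : ℤ) (h : (q : ℝ) * (2 * π) = p) : q = 0 := by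
  by_contra hq
  refine irrational_pi ⟨(p : ℚ) / (2 * q), ?_⟩
  have hq' : (q : ℝ) ≠ 0 := Int.cast_ne_zero.mpr hq
  push_cast
  field_simp
  linarith

private lemma dense_exp_orbit (θ : ℝ)
    (h : ∀ p q : ℤ, (q : ℝ) * θ = (p : ℝ) * (2 * π) → q = 0) :
    Dense {z : Circle | ∃ n : ℤ, z = Circle.exp (θ * n)} := by
  set S : Set Circle := {z : Circle | ∃ n : ℤ, z = Circle.exp (θ * n)} with hS
  set H : AddSubgroup ℝ := AddSubgroup.closure {θ, 2 * π} with hH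
  have hθH : θ ∈ H := AddSubgroup.subset_closure (by simp)
  have h2πH : (2 * π) ∈ H := AddSubgroup.subset_closure (by simp)
  have hHdense : Dense (H : Set ℝ) := by
    rcases AddSubgroup.dense_or_cyclic H with hd | ⟨a, ha⟩
    · exact hd
    · exfalso
      rw [ha] at hθH h2πH
      rcases AddSubgroup.mem_closure_singleton.mp hθH with ⟨m, hm⟩
      rcases AddSubgroup.mem_closure_singleton.mp h2πH with ⟨q, hq⟩
      have hqθ : (q : ℝ) * θ = (m : ℝ) * (2 * π) := by
        rw [← hm, ← hq, zsmul_eq_mul, zsmul_eq_mul]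
        ring
      have : q = 0 := h m q hqθ
      rw [this] at hq
      simp at hq
  have himg : ∀ x ∈ H, Circle.exp x ∈ S := by
    intro x hx
    induction hx using AddSubgroup.closure_induction with
    | mem y hy =>
      rcases hy with hy | hy
      · exact ⟨1, by simp [hy]⟩
      · rw [Set.mem_singleton_iff] at hy
        exact ⟨0, by simp [hy]⟩
    | zero => exact ⟨0, by simp⟩
    | add y z hy hz hy' hz' =>
      rcases hy' with ⟨m, hm⟩
      rcases hz' with ⟨n, hn⟩
      refine ⟨m + n, ?_⟩
      rw [Circle.exp_add, hm, hn, ← Circle.exp_add]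
      push_cast
      ring_nf
    | neg y hy hy' =>
      rcases hy' with ⟨m, hm⟩
      refine ⟨-m, ?_⟩
      rw [Circle.exp_neg, hm, ← Circle.exp_neg]
      push_cast
      ring_nf
  rw [dense_iff_closure_eq]
  apply Set.eq_univ_of_univ_subset
  intro z _
  have hz : z = Circle.exp (Complex.arg z) := (Circle.exp_arg z).symm
  have : z ∈ Circle.exp '' closure (H : Set ℝ) := by
    rw [hHdense.closure_eq]
    exact ⟨Complex.arg z, trivial, hz.symm⟩
  have hsub : Circle.exp '' closure (H : Set ℝ) ⊆ closure (Circle.exp '' (H : Set ℝ)) :=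
    image_closure_subset_closure_image Circle.exp.continuous
  have h2 : Circle.exp '' (H : Set ℝ) ⊆ S := by
    rintro _ ⟨x, hx, rfl⟩
    exact himg x hx
  exact closure_mono h2 (hsub this)

/-- For the irrational winding `α(v) = (e^{iv}, e^{2πiv})` of `ℝ` into the 2-torus and
`Ω = ℤ ∪ 2πℤ`, the closure of `α(Ω)` is `(𝕋 × {1}) ∪ ({1} × 𝕋)` while the closure of
`α(ℝ)` is all of `𝕋 × 𝕋`; in particular `α(Ω)` is not dense in the closure of `α(ℝ)`. -/
theorem irrational_winding_closure_of_int_union_two_pi_int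
    (α : ℝ → Circle × Circle) (hα : α = fun v => (Circle.exp v, Circle.exp (2 * π * v)))
    (Ω : Set ℝ) (hΩ : Ω = {x : ℝ | (∃ n : ℤ, x = n) ∨ ∃ n : ℤ, x = 2 * π * n}) :
    closure (α '' Ω) =
        (Set.univ ×ˢ ({1} : Set Circle)) ∪ (({1} : Set Circle) ×ˢ Set.univ) ∧
      closure (Set.range α) = Set.univ ∧
      ¬ Dense (α '' Ω) := by
  subst hα hΩ
  set A : Set ℝ := {x : ℝ | ∃ n : ℤ, x = n} with hA
  set B : Set ℝ := {x : ℝ | ∃ n : ℤ, x = 2 * π * n} with hB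
  set α : ℝ → Circle × Circle := fun v => (Circle.exp v, Circle.exp (2 * π * v)) with hα
  set S₁ : Set Circle := {z : Circle | ∃ n : ℤ, z = Circle.exp ((1 : ℝ) * n)} with hS₁
  set S₂ : Set Circle := {z : Circle | ∃ n : ℤ, z = Circle.exp ((2 * π * (2 * π)) * n)} with hS₂
  have hd₁ : Dense S₁ := by
    apply dense_exp_orbit
    intro p q hpq
    rw [mul_one] at hpq
    have : p = 0 := two_pi_int_rel q p hpq.symm
    subst this
    have hq0 : (q : ℝ) = 0 := by simpa using hpq
    exact_mod_cast hq0
  have hd₂ : Dense S₂ := by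
    apply dense_exp_orbit
    intro p q hpq
    apply two_pi_int_rel p q
    have h2π : (2 * π) ≠ 0 := Real.two_pi_pos.ne'
    have h' : ((q : ℝ) * (2 * π)) * (2 * π) = (p : ℝ) * (2 * π) := by
      rw [mul_assoc]; exact hpq
    exact mul_right_cancel₀ h2π h'
  have key1 : α '' A = S₁ ×ˢ ({1} : Set Circle) := by
    ext ⟨a, b⟩
    constructor
    · rintro ⟨x, ⟨n, rfl⟩, hx⟩
      simp only [hα, Prod.mk.injEq] at hx
      refine ⟨⟨n, by rw [← hx.1, one_mul]⟩, ?_⟩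
      simp only [Set.mem_singleton_iff, ← hx.2, Circle.exp_two_pi_mul_int]
    · rintro ⟨⟨n, hn⟩, hb⟩
      refine ⟨n, ⟨n, rfl⟩, ?_⟩
      simp only [hα, Prod.mk.injEq]
      constructor
      · show Circle.exp (n : ℝ) = (a, b).1
        rw [hn, one_mul]
      · show Circle.exp (2 * π * (n : ℝ)) = (a, b).2
        rw [hb, Circle.exp_two_pi_mul_int]
  have key2 : α '' B = ({1} : Set Circle) ×ˢ S₂ := by
    ext ⟨a, b⟩
    constructor
    · rintro ⟨x, ⟨n, rfl⟩, hx⟩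
      simp only [hα, Prod.mk.injEq] at hx
      refine ⟨by simp [← hx.1, Circle.exp_two_pi_mul_int], ⟨n, ?_⟩⟩
      rw [← hx.2]; ring_nf
    · rintro ⟨ha, ⟨n, hn⟩⟩
      refine ⟨2 * π * n, ⟨n, rfl⟩, ?_⟩
      simp only [hα, Prod.mk.injEq]
      constructor
      · show Circle.exp (2 * π * (n : ℝ)) = (a, b).1
        rw [ha, Circle.exp_two_pi_mul_int]
      · show Circle.exp (2 * π * (2 * π * (n : ℝ))) = (a, b).2
        rw [hn]
        congr 1
        ring
  have hone : closure ({1} : Set Circle) = {1} := isClosed_singleton.closure_eq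
  have hcl1 : closure (α '' A) = Set.univ ×ˢ ({1} : Set Circle) := by
    rw [key1, closure_prod_eq, hone, hd₁.closure_eq]
  have hcl2 : closure (α '' B) = ({1} : Set Circle) ×ˢ Set.univ := by
    rw [key2, closure_prod_eq, hone, hd₂.closure_eq]
  have hΩ' : {x : ℝ | (∃ n : ℤ, x = n) ∨ ∃ n : ℤ, x = 2 * π * n} = A ∪ B := rfl
  have hmain : closure (α '' {x : ℝ | (∃ n : ℤ, x = n) ∨ ∃ n : ℤ, x = 2 * π * n}) =
      (Set.univ ×ˢ ({1} : Set Circle)) ∪ (({1} : Set Circle) ×ˢ Set.univ) := by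
    rw [hΩ', Set.image_union, closure_union, hcl1, hcl2]
  refine ⟨hmain, ?_, ?_⟩
  · -- closure of range is everything
    set M : Submonoid (Circle × Circle) :=
      { carrier := Set.range α
        one_mem' := ⟨0, by simp [hα]⟩
        mul_mem' := by
          rintro _ _ ⟨x, rfl⟩ ⟨y, rfl⟩
          exact ⟨x + y, by simp [hα, Prod.ext_iff, Circle.exp_add, mul_add]⟩ } with hM
    have hMc : (M.topologicalClosure : Set (Circle × Circle)) = closure (Set.range α) := rfl
    apply Set.eq_univ_of_univ_subset
    rintro ⟨a, b⟩ _
    have hsubA : closure (α '' A) ⊆ closure (Set.range α) :=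
      closure_mono (Set.image_subset_range α A)
    have hsubB : closure (α '' B) ⊆ closure (Set.range α) :=
      closure_mono (Set.image_subset_range α B)
    have ha1 : (a, (1 : Circle)) ∈ M.topologicalClosure := by
      rw [SetLike.mem_coe.symm, hMc]
      exact hsubA (hcl1 ▸ ⟨trivial, rfl⟩)
    have hb1 : ((1 : Circle), b) ∈ M.topologicalClosure := by
      rw [SetLike.mem_coe.symm, hMc]
      exact hsubB (hcl2 ▸ ⟨rfl, trivial⟩)
    have : (a, (1:Circle)) * ((1:Circle), b) ∈ M.topologicalClosure :=
      mul_mem ha1 hb1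
    exact (by simpa using this : (a, b) ∈ M.topologicalClosure)
  · -- not dense
    intro hdense
    have := hdense.closure_eq
    rw [hmain] at this
    have hmem : ((Circle.exp π, Circle.exp π) : Circle × Circle) ∈
        (Set.univ ×ˢ ({1} : Set Circle)) ∪ (({1} : Set Circle) ×ˢ Set.univ) := by
      rw [this]; trivial
    have hne : Circle.exp π ≠ 1 := by
      intro h1
      obtain ⟨n, hn⟩ := Circle.exp_eq_one.mp h1
      have hπ : π ≠ 0 := Real.pi_ne_zero
      have h2n : (2 * n : ℝ) = 1 := by
        have : π * (2 * n) = π * 1 := by rw [mul_one]; linarith [hn]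
        exact mul_left_cancel₀ hπ this
      have : (2 * n : ℤ) = 1 := by exact_mod_cast h2n
      omega
    rcases hmem with ⟨_, h⟩ | ⟨h, _⟩ <;> exact hne h
end

section
/- Let V be a finite-dimensional real vector space and G ⊆ GL(V) a subgroup acting irreducibly on V (the only G-invariant linear subspaces of V are 0 and V). If there exist a nonzero u ∈ V* and a nonzero v ∈ V such that the matrix coefficient g ↦ u(g v) is bounded on G, then the closure of G in GL(V) is compact. Equivalently, if G is not contained in any compact subgroup of GL(V), then every matrix coefficient g ↦ u(g v) with u ≠ 0 and v ≠ 0 is unbounded on G. -/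
set_option synthInstance.maxHeartbeats 1000000 in
set_option maxHeartbeats 1000000 in
/-- If a subgroup `G ⊆ GL(V)` acts irreducibly on a finite-dimensional real vector space
`V` and some matrix coefficient `g ↦ u(g v)` with `u ≠ 0`, `v ≠ 0` is bounded on `G`,
then the closure of `G` in `GL(V)` is compact. -/
theorem closure_isCompact_of_bounded_matrix_coefficient
    {V : Type*} [NormedAddCommGroup V] [NormedSpace ℝ V] [FiniteDimensional ℝ V]
    (G : Subgroup (V →L[ℝ] V)ˣ)
    (hirr : ∀ W : Submodule ℝ V, (∀ g ∈ G, ∀ w ∈ W, (g : V →L[ℝ] V) w ∈ W) →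
      W = ⊥ ∨ W = ⊤)
    (u : Module.Dual ℝ V) (hu : u ≠ 0) (v : V) (hv : v ≠ 0)
    (hbdd : ∃ C : ℝ, ∀ g ∈ G, |u ((g : V →L[ℝ] V) v)| ≤ C) :
    IsCompact (closure (G : Set (V →L[ℝ] V)ˣ)) := by
  classical
  obtain ⟨C₀, hC₀⟩ := hbdd
  set C : ℝ := max C₀ 0 with hCdef
  have hC : ∀ g ∈ G, |u ((g : V →L[ℝ] V) v)| ≤ C :=
    fun g hg => (hC₀ g hg).trans (le_max_left _ _)
  have hC0 : (0 : ℝ) ≤ C := le_max_right _ _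
  -- the orbit of v spans V
  set S : Set V := {x | ∃ g ∈ G, (g : V →L[ℝ] V) v = x} with hSdef
  have hvS : v ∈ S := ⟨1, G.one_mem, by simp⟩
  have hSinv : ∀ g ∈ G, ∀ w ∈ Submodule.span ℝ S, (g : V →L[ℝ] V) w ∈ Submodule.span ℝ S := by
    intro g hg w hw
    induction hw using Submodule.span_induction with
    | mem x hx =>
        obtain ⟨h₀, hh₀, rfl⟩ := hx
        exact Submodule.subset_span ⟨g * h₀, G.mul_mem hg hh₀, by simp [Units.val_mul]⟩
    | zero => simpa using Submodule.zero_mem _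
    | add x y _ _ hx hy => simpa [map_add] using Submodule.add_mem _ hx hy
    | smul a x _ hx => simpa [map_smul] using Submodule.smul_mem _ a hx
  have hSspan : Submodule.span ℝ S = ⊤ := by
    rcases hirr (Submodule.span ℝ S) hSinv with h | h
    · exact absurd (h ▸ Submodule.subset_span hvS) (by simpa using hv)
    · exact h
  -- the orbit of u spans the dual
  set Φ : Set (Module.Dual ℝ V) :=
    {φ | ∃ g ∈ G, u ∘ₗ ((g : V →L[ℝ] V) : V →ₗ[ℝ] V) = φ} with hΦdef
  have huΦ : u ∈ Φ := ⟨1, G.one_mem, by ext x; simp⟩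
  have hΦspan : Submodule.span ℝ Φ = ⊤ := by
    set U : Submodule ℝ (Module.Dual ℝ V) := Submodule.span ℝ Φ with hUdef
    have hcomp : ∀ g ∈ G, ∀ φ ∈ U, φ ∘ₗ ((g : V →L[ℝ] V) : V →ₗ[ℝ] V) ∈ U := by
      intro g hg φ hφ
      induction hφ using Submodule.span_induction with
      | mem ψ hψ =>
          obtain ⟨h₀, hh₀, rfl⟩ := hψ
          refine Submodule.subset_span ⟨h₀ * g, G.mul_mem hh₀ hg, ?_⟩
          ext x; simp [Units.val_mul]
      | zero => simpa using Submodule.zero_mem _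
      | add x y _ _ hx hy =>
          have : (x + y) ∘ₗ ((g : V →L[ℝ] V) : V →ₗ[ℝ] V)
              = x ∘ₗ ((g : V →L[ℝ] V) : V →ₗ[ℝ] V) + y ∘ₗ ((g : V →L[ℝ] V) : V →ₗ[ℝ] V) := by
            ext z; simp
          rw [this]; exact Submodule.add_mem _ hx hy
      | smul a x _ hx =>
          have : (a • x) ∘ₗ ((g : V →L[ℝ] V) : V →ₗ[ℝ] V)
              = a • (x ∘ₗ ((g : V →L[ℝ] V) : V →ₗ[ℝ] V)) := by ext z; simp
          rw [this]; exact Submodule.smul_mem _ a hx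
    have hinv : ∀ g ∈ G, ∀ w ∈ U.dualCoannihilator, (g : V →L[ℝ] V) w ∈ U.dualCoannihilator := by
      intro g hg x hx
      rw [Submodule.mem_dualCoannihilator] at hx ⊢
      intro φ hφ
      simpa using hx _ (hcomp g hg φ hφ)
    rcases hirr U.dualCoannihilator hinv with h | h
    · have h2 := Subspace.dualCoannihilator_dualAnnihilator_eq (W := U)
      rw [h, Submodule.dualAnnihilator_bot] at h2
      exact h2.symm
    · obtain ⟨x, hx⟩ := DFunLike.ne_iff.mp hu
      have hxmem : x ∈ U.dualCoannihilator := h ▸ Submodule.mem_top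
      exact absurd ((Submodule.mem_dualCoannihilator x).mp hxmem u (Submodule.subset_span huΦ))
        (by simpa using hx)
  -- choose bases inside the spanning sets
  obtain ⟨sb, hsbS, hsbspan, hsbli⟩ := exists_linearIndependent ℝ S
  obtain ⟨sd, hsdΦ, hsdspan, hsdli⟩ := exists_linearIndependent ℝ Φ
  let bV : Module.Basis sb ℝ V := Module.Basis.mk hsbli
    (by rw [Subtype.range_coe, hsbspan, hSspan])
  let bD : Module.Basis sd ℝ (Module.Dual ℝ V) := Module.Basis.mk hsdli
    (by rw [Subtype.range_coe, hsdspan, hΦspan])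
  haveI : Fintype sb := FiniteDimensional.fintypeBasisIndex bV
  haveI : Fintype sd := FiniteDimensional.fintypeBasisIndex bD
  -- the "matrix entries" linear map
  let L : (V →L[ℝ] V) →ₗ[ℝ] (sd → sb → ℝ) :=
    { toFun := fun T k i => bD k (T (bV i))
      map_add' := by intro T T'; funext k i; simp
      map_smul' := by intro a T; funext k i; simp }
  have hLker : LinearMap.ker L = ⊥ := by
    rw [eq_bot_iff]
    rintro T hT
    rw [LinearMap.mem_ker] at hT
    have hT0 : ∀ i : sb, T (bV i) = 0 := by
      intro i
      rw [← Module.forall_dual_apply_eq_zero_iff ℝ]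
      have hone : ∀ k : sd, (Module.Dual.eval ℝ V (T (bV i))) (bD k)
          = (0 : Module.Dual ℝ (Module.Dual ℝ V)) (bD k) := by
        intro k
        have : bD k (T (bV i)) = 0 := congrFun (congrFun hT k) i
        simpa using this
      intro φ
      have := bD.ext hone
      calc φ (T (bV i)) = (Module.Dual.eval ℝ V (T (bV i))) φ := rfl
        _ = (0 : Module.Dual ℝ (Module.Dual ℝ V)) φ := by rw [this]
        _ = 0 := rfl
    have hlin : (T : V →ₗ[ℝ] V) = 0 := bV.ext (by intro i; simpa using hT0 i)
    have : T = 0 := by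
      ext x
      have := congrArg (fun (f : V →ₗ[ℝ] V) => f x) hlin
      simpa using this
    simp [this]
  obtain ⟨K, hKpos, hK⟩ := L.exists_antilipschitzWith hLker
  have hbound : ∀ g ∈ G, ‖(g : V →L[ℝ] V)‖ ≤ (K : ℝ) * C := by
    intro g hg
    have h1 : ‖(g : V →L[ℝ] V)‖ ≤ (K : ℝ) * ‖L (g : V →L[ℝ] V)‖ := by
      have := hK.le_mul_dist (g : V →L[ℝ] V) 0
      simpa [dist_zero_right, map_zero, dist_eq_norm] using this
    refine h1.trans (mul_le_mul_of_nonneg_left ?_ K.coe_nonneg)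
    rw [pi_norm_le_iff_of_nonneg hC0]
    intro k
    rw [pi_norm_le_iff_of_nonneg hC0]
    intro i
    obtain ⟨g₀, hg₀, hg₀eq⟩ := hsdΦ k.2
    obtain ⟨g₁, hg₁, hg₁eq⟩ := hsbS i.2
    have hentry : (L (g : V →L[ℝ] V)) k i = u (((g₀ * g * g₁ : (V →L[ℝ] V)ˣ) : V →L[ℝ] V) v) := by
      show bD k ((g : V →L[ℝ] V) (bV i)) = _
      rw [show bD k = (k : Module.Dual ℝ V) from Module.Basis.mk_apply _ _ _,
        show bV i = (i : V) from Module.Basis.mk_apply _ _ _, ← hg₀eq, ← hg₁eq]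
      simp [Units.val_mul]
    calc ‖(L (g : V →L[ℝ] V)) k i‖
        = |u (((g₀ * g * g₁ : (V →L[ℝ] V)ˣ) : V →L[ℝ] V) v)| := by
          rw [hentry, Real.norm_eq_abs]
      _ ≤ C := hC _ (G.mul_mem (G.mul_mem hg₀ hg) hg₁)
  -- conclude compactness via the closed embedding g ↦ (g, g⁻¹)
  set M : ℝ := (K : ℝ) * C with hMdef
  have hbound' : ∀ g ∈ G, ‖((g⁻¹ : (V →L[ℝ] V)ˣ) : V →L[ℝ] V)‖ ≤ M :=
    fun g hg => hbound g⁻¹ (G.inv_mem hg)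
  let f : (V →L[ℝ] V)ˣ → (V →L[ℝ] V) × (V →L[ℝ] V) := fun g => (↑g, ↑g⁻¹)
  have hemb : Topology.IsEmbedding f := by
    have h1 : Topology.IsEmbedding (Units.embedProduct (V →L[ℝ] V)) :=
      Units.isEmbedding_embedProduct
    have h2 : Topology.IsEmbedding
        (fun p : (V →L[ℝ] V) × (V →L[ℝ] V)ᵐᵒᵖ => (p.1, p.2.unop)) :=
      Topology.IsEmbedding.prodMap Topology.IsEmbedding.id
        (MulOpposite.opHomeomorph : (V →L[ℝ] V) ≃ₜ _).symm.isEmbedding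
    exact h2.comp h1
  have hrange : IsClosed (Set.range f) := by
    have : Set.range f
        = {p : (V →L[ℝ] V) × (V →L[ℝ] V) | p.1 * p.2 = 1} ∩ {p | p.2 * p.1 = 1} := by
      ext p
      constructor
      · rintro ⟨g, rfl⟩
        exact ⟨Units.mul_inv g, Units.inv_mul g⟩
      · rintro ⟨h1, h2⟩
        exact ⟨⟨p.1, p.2, h1, h2⟩, rfl⟩
    rw [this]
    exact (isClosed_eq (continuous_fst.mul continuous_snd) continuous_const).inter
      (isClosed_eq (continuous_snd.mul continuous_fst) continuous_const)
  have hcemb : Topology.IsClosedEmbedding f := ⟨hemb, hrange⟩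
  rw [hemb.isCompact_iff]
  have hprodcompact : IsCompact
      ((Metric.closedBall (0 : V →L[ℝ] V) M) ×ˢ (Metric.closedBall (0 : V →L[ℝ] V) M)) :=
    (isCompact_closedBall _ _).prod (isCompact_closedBall _ _)
  have hsub : f '' (G : Set (V →L[ℝ] V)ˣ)
      ⊆ (Metric.closedBall (0 : V →L[ℝ] V) M) ×ˢ (Metric.closedBall (0 : V →L[ℝ] V) M) := by
    rintro p ⟨g, hg, rfl⟩
    exact ⟨by simpa [dist_zero_right] using hbound g hg,
      by simpa [dist_zero_right] using hbound' g hg⟩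
  refine IsCompact.of_isClosed_subset hprodcompact
    (hcemb.isClosedMap _ isClosed_closure) ?_
  calc f '' closure (G : Set (V →L[ℝ] V)ˣ)
      ⊆ closure (f '' (G : Set (V →L[ℝ] V)ˣ)) :=
        image_closure_subset_closure_image hemb.continuous
    _ ⊆ _ := closure_minimal hsub hprodcompact.isClosed
end

section
/- Let S ⊂ ℝ be a finite set, c : S → ℝ, and F(t) = Σ_{λ ∈ S} c(λ) · exp(λ t). Suppose the set {λ ∈ S : c(λ) ≠ 0} is nonempty and its maximum λ₀ satisfies λ₀ > 0. Then the Cesàro averages of the oscillatory exponential tend to zero: (1/T) ∫₀^T exp(i·F(t)) dt → 0 as T → ∞. -/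
open Filter intervalIntegral

local notation "I" => Complex.I

/-- Key limit lemma: the normalized exponential sum tends to the top coefficient. -/
lemma expsum_normalized_tendsto (S : Finset ℝ) (a : ℝ → ℝ) (l₀ : ℝ) (hl₀ : l₀ ∈ S)
    (h : ∀ l ∈ S, a l ≠ 0 → l ≤ l₀) :
    Tendsto (fun t => (∑ l ∈ S, a l * Real.exp (l * t)) * Real.exp (-(l₀ * t)))
      atTop (nhds (a l₀)) := by
  have hfun : ∀ t : ℝ, (∑ l ∈ S, a l * Real.exp (l * t)) * Real.exp (-(l₀ * t))
      = ∑ l ∈ S, a l * Real.exp ((l - l₀) * t) := by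
    intro t
    rw [Finset.sum_mul]
    refine Finset.sum_congr rfl fun l _ => ?_
    rw [mul_assoc, ← Real.exp_add]
    ring_nf
  have hsum : (∑ l ∈ S, if l = l₀ then a l₀ else 0) = a l₀ := by
    rw [Finset.sum_ite_eq' S l₀ (fun _ => a l₀)]
    simp [hl₀]
  simp only [hfun]
  rw [← hsum]
  refine tendsto_finset_sum S fun l hl => ?_
  by_cases hal : a l = 0
  · by_cases hll : l = l₀
    · subst hll
      simp [hal]
    · simp [hal, hll]
  · by_cases hll : l = l₀
    · subst hll
      simp only [if_pos rfl, sub_self, zero_mul, Real.exp_zero, mul_one]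
      exact tendsto_const_nhds
    · simp only [if_neg hll]
      have hlt : l - l₀ < 0 := sub_neg.mpr (lt_of_le_of_ne (h l hl hal) hll)
      have h1 : Tendsto (fun t : ℝ => (l - l₀) * t) atTop atBot :=
        tendsto_id.const_mul_atTop_of_neg hlt
      have h2 : Tendsto (fun t : ℝ => Real.exp ((l - l₀) * t)) atTop (nhds 0) :=
        Real.tendsto_exp_atBot.comp h1
      simpa using h2.const_mul (a l)

/-- If `F(t) = Σ_{λ ∈ S} c(λ) e^{λ t}` is a real exponential polynomial whose largest
exponent `λ₀` with nonzero coefficient is positive, then the Cesàro averages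
`(1/T) ∫₀^T e^{i F(t)} dt` tend to `0` as `T → ∞`. -/
theorem exponential_polynomial_oscillatory_average_tendsto_zero
    (S : Finset ℝ) (c : ℝ → ℝ) (F : ℝ → ℝ)
    (hF : F = fun t => ∑ l ∈ S, c l * Real.exp (l * t))
    (l₀ : ℝ) (hl₀S : l₀ ∈ S) (hl₀c : c l₀ ≠ 0)
    (hmax : ∀ l ∈ S, c l ≠ 0 → l ≤ l₀) (hl₀pos : 0 < l₀) :
    Tendsto (fun T : ℝ => (1 / (T : ℂ)) * ∫ t in (0:ℝ)..T, Complex.exp (Complex.I * (F t : ℂ)))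
      atTop (nhds 0) := by
  -- derivatives
  set F₁ : ℝ → ℝ := fun t => ∑ l ∈ S, (c l * l) * Real.exp (l * t) with hF₁
  set F₂ : ℝ → ℝ := fun t => ∑ l ∈ S, (c l * l * l) * Real.exp (l * t) with hF₂
  have hexp : ∀ (l t : ℝ), HasDerivAt (fun t => Real.exp (l * t)) (l * Real.exp (l * t)) t := by
    intro l t
    have h1 : HasDerivAt (fun t : ℝ => l * t) l t := by
      simpa using (hasDerivAt_id t).const_mul l
    exact ((Real.hasDerivAt_exp (l * t)).comp t h1).congr_deriv (by ring)
  have hdF : ∀ t, HasDerivAt F (F₁ t) t := by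
    intro t
    rw [hF]
    exact HasDerivAt.fun_sum fun l _ => by
      simpa [mul_assoc] using ((hexp l t).const_mul (c l))
  have hdF₁ : ∀ t, HasDerivAt F₁ (F₂ t) t := by
    intro t
    exact HasDerivAt.fun_sum fun l _ => by
      simpa [mul_assoc, mul_comm, mul_left_comm] using ((hexp l t).const_mul (c l * l))
  -- continuity
  have hcF₁ : Continuous F₁ := continuous_finset_sum _ fun l _ => by fun_prop
  have hcF₂ : Continuous F₂ := continuous_finset_sum _ fun l _ => by fun_prop
  have hcF : Continuous F := by
    rw [hF]; exact continuous_finset_sum _ fun l _ => by fun_prop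
  have hcG : Continuous fun t : ℝ => Complex.exp (I * (F t : ℂ)) := by fun_prop
  -- sign
  set ε : ℝ := if 0 < c l₀ then 1 else -1 with hε
  have hεc : 0 < ε * c l₀ := by
    rcases lt_trichotomy (c l₀) 0 with h | h | h
    · simp only [hε, if_neg (not_lt.mpr h.le)]; linarith
    · exact absurd h hl₀c
    · simp only [hε, if_pos h]; linarith
  have hεabs : |ε| = 1 := by
    rcases le_or_gt (c l₀) 0 with h | h <;> simp [hε, h, not_lt.mpr, abs_of_nonneg] <;>
      simp [hε, not_lt.mpr h]
  -- limits
  have hlim1 : Tendsto (fun t => F₁ t * Real.exp (-(l₀ * t))) atTop (nhds (c l₀ * l₀)) :=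
    expsum_normalized_tendsto S (fun l => c l * l) l₀ hl₀S
      (fun l hl h => hmax l hl (fun hc => h (by simp [hc])))
  have hlim2 : Tendsto (fun t => F₂ t * Real.exp (-(l₀ * t))) atTop (nhds (c l₀ * l₀ * l₀)) :=
    expsum_normalized_tendsto S (fun l => c l * l * l) l₀ hl₀S
      (fun l hl h => hmax l hl (fun hc => h (by simp [hc])))
  -- eventual sign positivity
  have hev1 : ∀ᶠ t in atTop, 0 < ε * F₁ t := by
    have : Tendsto (fun t => ε * (F₁ t * Real.exp (-(l₀ * t)))) atTop
        (nhds (ε * (c l₀ * l₀))) := hlim1.const_mul ε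
    have hpos : 0 < ε * (c l₀ * l₀) := by
      have := mul_pos hεc hl₀pos; nlinarith
    filter_upwards [this.eventually (eventually_gt_nhds hpos)] with t ht
    have h' : ε * F₁ t = ε * (F₁ t * Real.exp (-(l₀ * t))) * Real.exp (l₀ * t) := by
      rw [mul_assoc, mul_assoc, ← Real.exp_add, neg_add_cancel, Real.exp_zero, mul_one]
    rw [h']
    exact mul_pos ht (Real.exp_pos _)
  have hev2 : ∀ᶠ t in atTop, 0 < ε * F₂ t := by
    have : Tendsto (fun t => ε * (F₂ t * Real.exp (-(l₀ * t)))) atTop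
        (nhds (ε * (c l₀ * l₀ * l₀))) := hlim2.const_mul ε
    have hpos : 0 < ε * (c l₀ * l₀ * l₀) := by
      nlinarith [mul_pos (mul_pos hεc hl₀pos) hl₀pos]
    filter_upwards [this.eventually (eventually_gt_nhds hpos)] with t ht
    have h' : ε * F₂ t = ε * (F₂ t * Real.exp (-(l₀ * t))) * Real.exp (l₀ * t) := by
      rw [mul_assoc, mul_assoc, ← Real.exp_add, neg_add_cancel, Real.exp_zero, mul_one]
    rw [h']
    exact mul_pos ht (Real.exp_pos _)
  -- |F₁| → ∞
  have hevabs : ∀ᶠ t in atTop, 1 ≤ |F₁ t| := by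
    have habs : Tendsto (fun t => |F₁ t * Real.exp (-(l₀ * t))|) atTop
        (nhds |c l₀ * l₀|) := hlim1.abs
    have hpos : 0 < |c l₀ * l₀| := by
      rw [abs_pos]; exact mul_ne_zero hl₀c (ne_of_gt hl₀pos)
    have hexpTop : Tendsto (fun t => Real.exp (l₀ * t)) atTop atTop :=
      Real.tendsto_exp_atTop.comp (tendsto_id.const_mul_atTop hl₀pos)
    have : Tendsto (fun t => |F₁ t * Real.exp (-(l₀ * t))| * Real.exp (l₀ * t)) atTop atTop :=
      habs.pos_mul_atTop hpos hexpTop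
    have heq : ∀ t, |F₁ t * Real.exp (-(l₀ * t))| * Real.exp (l₀ * t) = |F₁ t| := by
      intro t
      rw [abs_mul, abs_of_pos (Real.exp_pos _), mul_assoc, ← Real.exp_add]
      simp
    simp only [heq] at this
    exact this.eventually_ge_atTop 1
  -- choose A
  obtain ⟨A, hA⟩ := eventually_atTop.mp ((hev1.and hev2).and hevabs)
  have hAprop : ∀ t, A ≤ t → 0 < ε * F₁ t ∧ 0 < ε * F₂ t ∧ 1 ≤ |F₁ t| := by
    intro t ht; exact ⟨(hA t ht).1.1, (hA t ht).1.2, (hA t ht).2⟩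
  have hF₁ne : ∀ t, A ≤ t → F₁ t ≠ 0 := by
    intro t ht h
    have := (hAprop t ht).2.2
    rw [h] at this; norm_num at this
  -- main bound on the tail integral
  have key : ∀ T, A ≤ T → ‖∫ t in A..T, Complex.exp (I * (F t : ℂ))‖ ≤ 4 := by
    intro T hT
    have huIcc : Set.uIcc A T ⊆ Set.Ici A := by
      rw [Set.uIcc_of_le hT]; exact fun x hx => hx.1
    -- H and its derivative
    set H : ℝ → ℂ := fun t => Complex.exp (I * (F t : ℂ)) / (I * (F₁ t : ℂ)) with hH
    set g : ℝ → ℂ := fun t => I * Complex.exp (I * (F t : ℂ)) * (F₂ t : ℂ) / ((F₁ t : ℂ))^2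
      with hg
    have hdH : ∀ t ∈ Set.uIcc A T, HasDerivAt H (Complex.exp (I * (F t : ℂ)) + g t) t := by
      intro t ht
      have htA : A ≤ t := huIcc ht
      have hne : (F₁ t : ℂ) ≠ 0 := Complex.ofReal_ne_zero.mpr (hF₁ne t htA)
      have hu : HasDerivAt (fun t => Complex.exp (I * (F t : ℂ)))
          (Complex.exp (I * (F t : ℂ)) * (I * (F₁ t : ℂ))) t := by
        have h1 : HasDerivAt (fun t : ℝ => ((F t : ℂ))) ((F₁ t : ℂ)) t :=
          (hdF t).ofReal_comp
        exact (h1.const_mul I).cexp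
      have hv : HasDerivAt (fun t : ℝ => I * (F₁ t : ℂ)) (I * (F₂ t : ℂ)) t :=
        ((hdF₁ t).ofReal_comp).const_mul I
      have hvne : I * (F₁ t : ℂ) ≠ 0 := mul_ne_zero Complex.I_ne_zero hne
      have := hu.div hv hvne
      refine this.congr_deriv ?_
      have hI3 : Complex.I ^ 3 = -Complex.I := by
        have : Complex.I ^ 3 = Complex.I ^ 2 * Complex.I := by ring
        rw [this, Complex.I_sq]; ring
      simp only [hg]
      field_simp
      ring_nf
      rw [Complex.I_sq]
      ring
    -- integrability
    have hintg : IntervalIntegrable g MeasureTheory.volume A T := by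
      apply ContinuousOn.intervalIntegrable
      apply ContinuousOn.div
      · exact (Continuous.continuousOn (by fun_prop))
      · exact (Continuous.continuousOn (by fun_prop))
      · intro t ht
        exact pow_ne_zero 2 (Complex.ofReal_ne_zero.mpr (hF₁ne t (huIcc ht)))
    have hintG : IntervalIntegrable (fun t => Complex.exp (I * (F t : ℂ)))
        MeasureTheory.volume A T := hcG.intervalIntegrable A T
    have hFTC : ∫ t in A..T, (Complex.exp (I * (F t : ℂ)) + g t) = H T - H A :=
      integral_eq_sub_of_hasDerivAt hdH (hintG.add hintg)
    have hsplit : ∫ t in A..T, Complex.exp (I * (F t : ℂ))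
        = (H T - H A) - ∫ t in A..T, g t := by
      rw [← hFTC, integral_add hintG hintg]; ring
    -- bound ‖H t‖ ≤ 1 for A ≤ t
    have hHbound : ∀ t, A ≤ t → ‖H t‖ ≤ 1 := by
      intro t ht
      rw [hH]
      simp only [norm_div, norm_mul]
      rw [show I * (F t : ℂ) = (F t : ℂ) * I by ring, Complex.norm_exp_ofReal_mul_I]
      rw [Complex.norm_I, Complex.norm_real, Real.norm_eq_abs, one_mul]
      rw [div_le_one (lt_of_lt_of_le one_pos (hAprop t ht).2.2)]
      exact (hAprop t ht).2.2
    -- bound on ∫ g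
    have hgbound : ‖∫ t in A..T, g t‖ ≤ 2 := by
      have h1 : ‖∫ t in A..T, g t‖ ≤ ∫ t in A..T, ‖g t‖ :=
        intervalIntegral.norm_integral_le_integral_norm hT
      have hnorm : ∀ t ∈ Set.uIcc A T, ‖g t‖ = ε * (F₂ t / (F₁ t)^2) := by
        intro t ht
        have htA := huIcc ht
        rw [hg]
        simp only [norm_div, norm_mul, Complex.norm_I, one_mul]
        rw [show I * (F t : ℂ) = (F t : ℂ) * I by ring, Complex.norm_exp_ofReal_mul_I, one_mul]
        rw [← Complex.ofReal_pow, Complex.norm_real, Complex.norm_real, Real.norm_eq_abs, Real.norm_eq_abs]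
        rw [abs_of_nonneg (sq_nonneg (F₁ t))]
        have hF₂abs : |F₂ t| = ε * F₂ t := by
          have h2 := (hAprop t htA).2.1
          rcases le_or_gt (c l₀) 0 with h | h
          · simp only [hε, if_neg (not_lt.mpr h)] at h2 ⊢
            rw [abs_of_neg (by linarith)]; ring
          · simp only [hε, if_pos h] at h2 ⊢
            rw [abs_of_pos (by linarith)]; ring
        rw [hF₂abs]; ring
      refine h1.trans ?_
      rw [intervalIntegral.integral_congr hnorm]
      -- FTC for φ = -(F₁)⁻¹
      set φ : ℝ → ℝ := fun t => -(F₁ t)⁻¹ with hφ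
      have hdφ : ∀ t ∈ Set.uIcc A T, HasDerivAt φ (F₂ t / (F₁ t)^2) t := by
        intro t ht
        have hne := hF₁ne t (huIcc ht)
        have h := ((hdF₁ t).inv hne).neg
        exact h.congr_deriv (by ring)
      have hintφ : IntervalIntegrable (fun t => F₂ t / (F₁ t)^2) MeasureTheory.volume A T := by
        apply ContinuousOn.intervalIntegrable
        apply ContinuousOn.div hcF₂.continuousOn (hcF₁.pow 2).continuousOn
        intro t ht
        exact pow_ne_zero 2 (hF₁ne t (huIcc ht))
      have h2 : ∫ t in A..T, F₂ t / (F₁ t)^2 = φ T - φ A :=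
        integral_eq_sub_of_hasDerivAt hdφ hintφ
      have h3 : ∫ t in A..T, ε * (F₂ t / (F₁ t)^2) = ε * (φ T - φ A) := by
        rw [intervalIntegral.integral_const_mul, h2]
      calc ∫ t in A..T, ε * (F₂ t / (F₁ t)^2) = ε * (φ T - φ A) := h3
        _ ≤ |ε * (φ T - φ A)| := le_abs_self _
        _ = |φ T - φ A| := by rw [abs_mul, hεabs, one_mul]
        _ ≤ |φ T| + |φ A| := abs_sub _ _
        _ ≤ 1 + 1 := by
            have hφb : ∀ t, A ≤ t → |φ t| ≤ 1 := by
              intro t ht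
              rw [hφ]
              simp only [abs_neg, abs_inv]
              rw [inv_le_one_iff₀]
              right; exact (hAprop t ht).2.2
            exact add_le_add (hφb T hT) (hφb A le_rfl)
        _ = 2 := by norm_num
    calc ‖∫ t in A..T, Complex.exp (I * (F t : ℂ))‖
        = ‖(H T - H A) - ∫ t in A..T, g t‖ := by rw [hsplit]
      _ ≤ ‖H T - H A‖ + ‖∫ t in A..T, g t‖ := norm_sub_le _ _
      _ ≤ (‖H T‖ + ‖H A‖) + 2 := add_le_add (norm_sub_le _ _) hgbound
      _ ≤ (1 + 1) + 2 := by
          exact add_le_add (add_le_add (hHbound T hT) (hHbound A le_rfl)) le_rfl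
      _ = 4 := by norm_num
  -- assemble
  have hbound : ∀ᶠ T : ℝ in atTop,
      ‖(1 / ((T:ℝ) : ℂ)) * ∫ t in (0:ℝ)..T, Complex.exp (I * (F t : ℂ))‖ ≤ (|A| + 4) / T := by
    filter_upwards [eventually_ge_atTop A, eventually_gt_atTop (0:ℝ)] with T hTA hT0
    have hint1 : IntervalIntegrable (fun t => Complex.exp (I * (F t : ℂ)))
        MeasureTheory.volume 0 A := hcG.intervalIntegrable _ _
    have hint2 : IntervalIntegrable (fun t => Complex.exp (I * (F t : ℂ)))
        MeasureTheory.volume A T := hcG.intervalIntegrable _ _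
    have hsplit : ∫ t in (0:ℝ)..T, Complex.exp (I * (F t : ℂ))
        = (∫ t in (0:ℝ)..A, Complex.exp (I * (F t : ℂ)))
          + ∫ t in A..T, Complex.exp (I * (F t : ℂ)) :=
      (intervalIntegral.integral_add_adjacent_intervals hint1 hint2).symm
    have hb1 : ‖∫ t in (0:ℝ)..A, Complex.exp (I * (F t : ℂ))‖ ≤ |A| := by
      have := intervalIntegral.norm_integral_le_of_norm_le_const
        (a := 0) (b := A) (C := 1) (f := fun t => Complex.exp (I * (F t : ℂ)))
        (fun t _ => by
          show ‖Complex.exp (I * (F t : ℂ))‖ ≤ 1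
          rw [show I * (F t : ℂ) = (F t : ℂ) * I by ring,
            Complex.norm_exp_ofReal_mul_I])
      simpa using this
    rw [norm_mul]
    have hTnorm : ‖(1 / (T : ℂ))‖ = 1 / T := by
      rw [norm_div, norm_one, Complex.norm_real]
      simp [abs_of_pos hT0]
    rw [hTnorm, hsplit, div_eq_mul_inv (|A| + 4), mul_comm (|A| + 4), one_div]
    apply mul_le_mul_of_nonneg_left _ (by positivity)
    calc ‖(∫ t in (0:ℝ)..A, Complex.exp (I * (F t : ℂ)))
          + ∫ t in A..T, Complex.exp (I * (F t : ℂ))‖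
        ≤ ‖∫ t in (0:ℝ)..A, Complex.exp (I * (F t : ℂ))‖
          + ‖∫ t in A..T, Complex.exp (I * (F t : ℂ))‖ := norm_add_le _ _
      _ ≤ |A| + 4 := add_le_add hb1 (key T hTA)
  have hlim0 : Tendsto (fun T : ℝ => (|A| + 4) / T) atTop (nhds 0) :=
    tendsto_const_nhds.div_atTop tendsto_id
  exact squeeze_zero_norm' hbound hlim0
end

section
/- Let x, y be real numbers with x·y ≠ 0. Then the image of the hyperbola orbit {(e^t·x, e^{−t}·y) : t ∈ ℝ} ⊆ ℝ² under the quotient homomorphism ℝ² → ℝ²/ℤ² is not dense in the torus ℝ²/ℤ². -/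
/-- If `r` is within `3/16` of `1/2`, then `r + n` is at least `5/16` away from `0`
for every integer `n`. -/
lemma hyp_abs_add_int (r : ℝ) (n : ℤ) (h : |r - 1/2| ≤ 3/16) : 5/16 ≤ |r + n| := by
  rw [abs_le] at h
  rcases le_or_gt 0 n with hn | hn
  · have hn' : (0:ℝ) ≤ (n:ℝ) := by exact_mod_cast hn
    calc (5:ℝ)/16 ≤ r + n := by linarith
      _ ≤ |r + n| := le_abs_self _
  · have hn0 : n ≤ -1 := by omega
    have hn' : (n:ℝ) ≤ -1 := by exact_mod_cast hn0
    calc (5:ℝ)/16 ≤ -(r + n) := by linarith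
      _ ≤ |r + n| := neg_le_abs _

lemma hyp_key (c : ℝ) (hc : c ≠ 0) :
    ∃ β₀ ε : ℝ, 0 < ε ∧ ∀ (n m : ℤ) (α β : ℝ), |α - 1/2| < ε → |β - β₀| < ε →
      (α + n) * (β + m) ≠ c := by
  set N : ℤ := ⌈4 * |c|⌉ + 2 with hN
  have hNc : (4:ℝ) * |c| + 2 ≤ (N:ℝ) := by
    have := Int.le_ceil (4 * |c|)
    push_cast [hN]
    linarith
  set B : Finset ℝ := ((Finset.Icc (-N) N) ×ˢ (Finset.Icc (-N) N)).image
      (fun p : ℤ × ℤ => c / ((p.1 : ℝ) + 1/2) - (p.2 : ℝ)) with hB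
  obtain ⟨β₀, hβ₀I, hβ₀B⟩ : ((Set.Ioo (3/8 : ℝ) (5/8)) \ B).Nonempty :=
    ((Set.Ioo_infinite (by norm_num)).diff B.finite_toSet).nonempty
  obtain ⟨δ, hδpos, hδle⟩ : ∃ δ : ℝ, 0 < δ ∧ ∀ b ∈ B, δ ≤ |β₀ - b| := by
    set D : Finset ℝ := insert 1 (B.image fun b => |β₀ - b|) with hD
    have hDne : D.Nonempty := ⟨1, Finset.mem_insert_self _ _⟩
    refine ⟨D.min' hDne, ?_, ?_⟩
    · rw [Finset.lt_min'_iff]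
      intro b hb
      rcases Finset.mem_insert.mp hb with rfl | hb
      · norm_num
      · obtain ⟨b', hb', rfl⟩ := Finset.mem_image.mp hb
        have : β₀ ≠ b' := fun hbe => hβ₀B (hbe ▸ hb')
        exact abs_pos.mpr (sub_ne_zero.mpr this)
    · exact fun b hb =>
        Finset.min'_le _ _ (Finset.mem_insert_of_mem (Finset.mem_image_of_mem _ hb))
  have hcpos : (0:ℝ) ≤ |c| := abs_nonneg c
  refine ⟨β₀, min (1/16) (δ / (2 + 11 * |c|)), lt_min (by norm_num) (by positivity), ?_⟩
  intro n m α β hα hβ heq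
  set ε : ℝ := min (1/16) (δ / (2 + 11 * |c|)) with hε
  have hε16 : ε ≤ 1/16 := min_le_left _ _
  have hεδ : ε * (2 + 11 * |c|) ≤ δ := by
    have h1 : ε ≤ δ / (2 + 11 * |c|) := min_le_right _ _
    have h2 : (0:ℝ) < 2 + 11 * |c| := by linarith
    calc ε * (2 + 11 * |c|) ≤ (δ / (2 + 11 * |c|)) * (2 + 11 * |c|) := by nlinarith
      _ = δ := by field_simp
  have hεpos : 0 < ε := lt_min (by norm_num) (by positivity)
  obtain ⟨hβ₀l, hβ₀r⟩ := hβ₀I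
  have hα' : |α - 1/2| ≤ 3/16 := le_trans hα.le (by linarith)
  have hβ' : |β - 1/2| ≤ 3/16 := by
    have h1 : |β - 1/2| ≤ |β - β₀| + |β₀ - 1/2| := abs_sub_le β β₀ (1/2)
    have h2 : |β₀ - 1/2| ≤ 1/8 := by rw [abs_le]; constructor <;> linarith
    linarith
  have hA : 5/16 ≤ |α + n| := hyp_abs_add_int α n hα'
  have hBm : 5/16 ≤ |β + m| := hyp_abs_add_int β m hβ'
  have habs : |α + n| * |β + m| = |c| := by rw [← abs_mul, heq]
  have hαbound : |α| ≤ 1 := by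
    rw [abs_le] at hα' ⊢; constructor <;> linarith
  have hβbound : |β| ≤ 1 := by
    rw [abs_le] at hβ' ⊢; constructor <;> linarith
  by_cases hnm : |n| ≤ N ∧ |m| ≤ N
  · -- bounded case: use the choice of β₀
    obtain ⟨hn, hm⟩ := hnm
    have hnB : (c / ((n:ℝ) + 1/2) - (m:ℝ)) ∈ B := by
      rw [hB]
      exact Finset.mem_image.mpr ⟨(n, m), Finset.mem_product.mpr
        ⟨Finset.mem_Icc.mpr (abs_le.mp hn), Finset.mem_Icc.mpr (abs_le.mp hm)⟩, rfl⟩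
    set b0 : ℝ := c / ((n:ℝ) + 1/2) - (m:ℝ) with hb0
    have hδb : δ ≤ |β₀ - b0| := hδle _ hnB
    clear hδle hnB hβ₀B hn hm hNc habs hc
    clear hB B hN N
    have hP : 5/16 ≤ |(n:ℝ) + 1/2| := by
      have := hyp_abs_add_int (1/2) n (by norm_num)
      rwa [add_comm] at this
    have hPne : ((n:ℝ) + 1/2) ≠ 0 := by
      intro h0; rw [h0, abs_zero] at hP; linarith
    have hAne : (α + (n:ℝ)) ≠ 0 := by
      intro h0; rw [h0, abs_zero] at hA; linarith
    have hcp : c / ((n:ℝ) + 1/2) * ((n:ℝ) + 1/2) = c := div_mul_cancel₀ c hPne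
    have hid : (β - b0) * ((α + (n:ℝ)) * ((n:ℝ) + 1/2)) = c * (1/2 - α) := by
      rw [hb0]
      linear_combination ((n:ℝ) + 1/2) * heq - (α + (n:ℝ)) * hcp
    have hidabs : |β - b0| * (|α + (n:ℝ)| * |(n:ℝ) + 1/2|) = |c| * |1/2 - α| := by
      rw [← abs_mul, ← abs_mul, ← abs_mul, hid]
    have h12 : |1/2 - α| < ε := by rwa [abs_sub_comm]
    have hprod : (5:ℝ)/16 * (5/16) ≤ |α + (n:ℝ)| * |(n:ℝ) + 1/2| :=
      mul_le_mul hA hP (by norm_num) (abs_nonneg _)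
    have hbb : |β - b0| ≤ (256/25) * (|c| * ε) := by
      have h1 : |β - b0| * (5/16 * (5/16)) ≤ |β - b0| * (|α + (n:ℝ)| * |(n:ℝ) + 1/2|) :=
        mul_le_mul_of_nonneg_left hprod (abs_nonneg (β - b0))
      have h2 : |c| * |1/2 - α| ≤ |c| * ε :=
        mul_le_mul_of_nonneg_left h12.le hcpos
      rw [hidabs] at h1
      norm_num at h1
      linarith
    have htri : |β₀ - b0| ≤ |β₀ - β| + |β - b0| := abs_sub_le β₀ β b0
    have hββ₀ : |β₀ - β| < ε := by rwa [abs_sub_comm]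
    have e1 : (256/25) * (|c| * ε) ≤ 11 * (|c| * ε) :=
      mul_le_mul_of_nonneg_right (by norm_num) (mul_nonneg hcpos hεpos.le)
    have e2 : ε * (2 + 11 * |c|) = 2 * ε + 11 * (|c| * ε) := by ring
    linarith
  · -- unbounded case: the product is too large
    have hbig : (4:ℝ) * |c| + 2 ≤ |α + n| ∨ (4:ℝ) * |c| + 2 ≤ |β + m| := by
      rcases not_and_or.mp hnm with hn | hm
      · left
        have hn' : N + 1 ≤ |n| := by omega
        have hn'' : (N:ℝ) + 1 ≤ |(n:ℝ)| := by exact_mod_cast hn'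
        have : |(n:ℝ)| ≤ |α + n| + |α| := by
          calc |(n:ℝ)| = |(α + n) - α| := by ring_nf
            _ ≤ |α + n| + |α| := abs_sub _ _
        linarith
      · right
        have hm' : N + 1 ≤ |m| := by omega
        have hm'' : (N:ℝ) + 1 ≤ |(m:ℝ)| := by exact_mod_cast hm'
        have : |(m:ℝ)| ≤ |β + m| + |β| := by
          calc |(m:ℝ)| = |(β + m) - β| := by ring_nf
            _ ≤ |β + m| + |β| := abs_sub _ _
        linarith
    rcases hbig with hb | hb
    · have h1 : (4 * |c| + 2) * (5/16) ≤ |α + n| * |β + m| :=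
        mul_le_mul hb hBm (by norm_num) (by positivity)
      rw [habs] at h1
      linarith
    · have h1 : (5/16) * (4 * |c| + 2) ≤ |α + n| * |β + m| :=
        mul_le_mul hA hb (by linarith) (abs_nonneg _)
      rw [habs] at h1
      linarith

/-- The image of the hyperbola orbit `{(e^t x, e^{-t} y) : t ∈ ℝ}` (with `x y ≠ 0`) under
the quotient map `ℝ² → ℝ²/ℤ²` is not dense in the 2-torus. -/
theorem hyperbola_orbit_not_dense_in_torus
    (x y : ℝ) (h : x * y ≠ 0) :
    ¬ Dense ((fun p : ℝ × ℝ => ((p.1 : AddCircle (1:ℝ)), (p.2 : AddCircle (1:ℝ)))) ''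
      {p : ℝ × ℝ | ∃ t : ℝ, p = (Real.exp t * x, Real.exp (-t) * y)}) := by
  intro hd
  obtain ⟨β₀, ε, hεpos, hkey⟩ := hyp_key (x * y) h
  set q : ℝ → AddCircle (1:ℝ) := fun r => (r : AddCircle (1:ℝ)) with hq
  have hopen : IsOpenMap (QuotientAddGroup.mk : ℝ → AddCircle (1:ℝ)) :=
    QuotientAddGroup.isOpenMap_coe
  set U : Set (AddCircle (1:ℝ) × AddCircle (1:ℝ)) :=
    (q '' Set.Ioo (1/2 - ε) (1/2 + ε)) ×ˢ (q '' Set.Ioo (β₀ - ε) (β₀ + ε)) with hU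
  have hUopen : IsOpen U :=
    (hopen _ isOpen_Ioo).prod (hopen _ isOpen_Ioo)
  have hUne : U.Nonempty := by
    refine ⟨(q (1/2), q β₀), ?_, ?_⟩
    · exact ⟨1/2, ⟨by linarith, by linarith⟩, rfl⟩
    · exact ⟨β₀, ⟨by linarith, by linarith⟩, rfl⟩
  obtain ⟨z, hzU, hzS⟩ := hd.inter_open_nonempty U hUopen hUne
  obtain ⟨p, hp, hpz⟩ := hzS
  obtain ⟨t, rfl⟩ := hp
  rw [← hpz] at hzU
  obtain ⟨hz1, hz2⟩ := hzU
  obtain ⟨α, hαI, hα⟩ := hz1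
  obtain ⟨β, hβI, hβ⟩ := hz2
  -- extract integer translates
  have hcoe : ∀ a b : ℝ, (a : AddCircle (1:ℝ)) = (b : AddCircle (1:ℝ)) → ∃ k : ℤ, b = a + k := by
    intro a b hab
    rw [QuotientAddGroup.eq] at hab
    obtain ⟨k, hk⟩ := AddSubgroup.mem_zmultiples_iff.mp hab
    rw [zsmul_eq_mul, mul_one] at hk
    exact ⟨k, by linarith⟩
  obtain ⟨n, hn⟩ := hcoe α (Real.exp t * x) hα
  obtain ⟨m, hm⟩ := hcoe β (Real.exp (-t) * y) hβ
  apply hkey n m α β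
  · rw [abs_lt]; obtain ⟨h1, h2⟩ := hαI; constructor <;> linarith
  · rw [abs_lt]; obtain ⟨h1, h2⟩ := hβI; constructor <;> linarith
  · calc (α + n) * (β + m) = (Real.exp t * x) * (Real.exp (-t) * y) := by rw [← hn, ← hm]
      _ = (Real.exp t * Real.exp (-t)) * (x * y) := by ring
      _ = x * y := by rw [← Real.exp_add]; simp
end
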